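/- Let P₀, D be m×m stochastic matrices with D having identical rows; let P_ε = (1-ε)P₀ + εD for ε ∈ (0,1], and let π_ε be its stationary distribution. Then for every initial distribution p̄, state j, and n ≥ 0, |p_{ε,p̄,j}(n) - π_{ε,j}| ≤ (1 - Q_{ε,p̄}) (1 - Q(P₀))^n (1 - ε)^n, where Q_{ε,p̄} = ∑_i min(p_i, π_{ε,i}) and Q(A) = min_{i,j} ∑_k min(a_{ik}, a_{jk}) (with the convention (1-Q(P₀))^0 = 1). -/

import Mathlib

open Finset Matrix

/-- The ergodicity functional `Q(A) = min_{i,j} ∑_k min (a_{ik}) (a_{jk})`. -/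
noncomputable def ergQ {m : ℕ} (A : Matrix (Fin m) (Fin m) ℝ) : ℝ :=
  ⨅ p : Fin m × Fin m, ∑ k, min (A p.1 k) (A p.2 k)


/-- If a vector sums to zero, each coordinate is at most half the ℓ¹ norm. -/
lemma half_l1 {m : ℕ} (v : Fin m → ℝ) (hv : ∑ i, v i = 0) (j : Fin m) :
    |v j| ≤ (∑ i, |v i|) / 2 := by
  have h1 : v j ≤ ∑ i, max (v i) 0 := by
    calc v j ≤ max (v j) 0 := le_max_left _ _
    _ ≤ ∑ i, max (v i) 0 :=
      Finset.single_le_sum (f := fun i => max (v i) 0)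
        (fun i _ => le_max_right _ _) (Finset.mem_univ j)
  have h2 : -v j ≤ ∑ i, max (-v i) 0 := by
    calc -v j ≤ max (-v j) 0 := le_max_left _ _
    _ ≤ ∑ i, max (-v i) 0 :=
      Finset.single_le_sum (f := fun i => max (-v i) 0)
        (fun i _ => le_max_right _ _) (Finset.mem_univ j)
  have e1 : ∑ i, max (v i) 0 = (∑ i, |v i|) / 2 := by
    have h : ∀ i ∈ Finset.univ, max (v i) 0 = (|v i| + v i) / 2 := by
      intro i _; rcases le_total (v i) 0 with h | h
      · rw [max_eq_right h, abs_of_nonpos h]; ring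
      · rw [max_eq_left h, abs_of_nonneg h]; ring
    rw [Finset.sum_congr rfl h, ← Finset.sum_div, Finset.sum_add_distrib, hv, add_zero]
  have e2 : ∑ i, max (-v i) 0 = (∑ i, |v i|) / 2 := by
    have h : ∀ i ∈ Finset.univ, max (-v i) 0 = (|v i| - v i) / 2 := by
      intro i _; rcases le_total (v i) 0 with h | h
      · rw [max_eq_left (by linarith), abs_of_nonpos h]; ring
      · rw [max_eq_right (by linarith), abs_of_nonneg h]; ring
    rw [Finset.sum_congr rfl h, ← Finset.sum_div, Finset.sum_sub_distrib, hv, sub_zero]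
  rw [abs_le]; constructor <;> [linarith [h2, e2]; linarith [h1, e1]]

lemma row_diff {m : ℕ} (P : Matrix (Fin m) (Fin m) ℝ)
    (hr : ∀ i, ∑ j, P i j = 1) (i i' : Fin m) :
    ∑ j, |P i j - P i' j| ≤ 2 * (1 - ergQ P) := by
  have hQ : ergQ P ≤ ∑ k, min (P i k) (P i' k) :=
    ciInf_le (Set.finite_range _).bddBelow (i, i')
  have e : ∀ k ∈ Finset.univ, |P i k - P i' k| = P i k + P i' k - 2 * min (P i k) (P i' k) := by
    intro k _; rcases le_total (P i k) (P i' k) with h | h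
    · rw [abs_of_nonpos (by linarith), min_eq_left h]; ring
    · rw [abs_of_nonneg (by linarith), min_eq_right h]; ring
  rw [Finset.sum_congr rfl e, Finset.sum_sub_distrib, Finset.sum_add_distrib, hr i, hr i',
    ← Finset.mul_sum]
  linarith

/-- Dobrushin contraction for zero-sum vectors. -/
lemma contraction {m : ℕ} (P : Matrix (Fin m) (Fin m) ℝ)
    (hr : ∀ i, ∑ j, P i j = 1) (μ : Fin m → ℝ) (hμ : ∑ i, μ i = 0) :
    ∑ j, |∑ i, μ i * P i j| ≤ (1 - ergQ P) * ∑ i, |μ i| := by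
  set S : ℝ := ∑ i, max (μ i) 0 with hS
  have hsplit : ∀ i, μ i = max (μ i) 0 - max (-μ i) 0 := by
    intro i; rcases le_total (μ i) 0 with h | h
    · rw [max_eq_right h, max_eq_left (by linarith)]; linarith
    · rw [max_eq_left h, max_eq_right (by linarith)]; linarith
  have habs : ∀ i, |μ i| = max (μ i) 0 + max (-μ i) 0 := by
    intro i; rcases le_total (μ i) 0 with h | h
    · rw [max_eq_right h, max_eq_left (by linarith), abs_of_nonpos h]; linarith
    · rw [max_eq_left h, max_eq_right (by linarith), abs_of_nonneg h]; linarith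
  have hneg : ∑ i, max (-μ i) 0 = S := by
    have h2 : ∑ i, (max (μ i) 0 - max (-μ i) 0) = 0 := by
      calc ∑ i, (max (μ i) 0 - max (-μ i) 0) = ∑ i, μ i :=
            Finset.sum_congr rfl fun i _ => (hsplit i).symm
        _ = 0 := hμ
    rw [Finset.sum_sub_distrib] at h2
    linarith
  have hnorm : ∑ i, |μ i| = 2 * S := by
    rw [Finset.sum_congr rfl fun i _ => habs i, Finset.sum_add_distrib, hneg]; ring
  have hSnonneg : 0 ≤ S := Finset.sum_nonneg fun i _ => le_max_right _ _
  rcases eq_or_lt_of_le hSnonneg with hS0 | hSpos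
  · have hμ0 : ∀ i, μ i = 0 := by
      intro i
      have h1 : |μ i| ≤ ∑ i, |μ i| :=
        Finset.single_le_sum (f := fun i => |μ i|) (fun i _ => abs_nonneg _)
          (Finset.mem_univ i)
      rw [hnorm, ← hS0] at h1
      have h2 := abs_nonneg (μ i)
      have : |μ i| = 0 := by linarith
      exact abs_eq_zero.mp this
    simp [hμ0]
  · have key : ∀ j, (∑ i, μ i * P i j) * S
        = ∑ i, ∑ i', max (μ i) 0 * max (-μ i') 0 * (P i j - P i' j) := by
      intro j
      have hA : ∑ i, ∑ i', max (μ i) 0 * max (-μ i') 0 * P i j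
          = (∑ i, max (μ i) 0 * P i j) * S := by
        rw [Finset.sum_mul]
        refine Finset.sum_congr rfl fun i _ => ?_
        rw [← hneg, Finset.mul_sum]
        exact Finset.sum_congr rfl fun i' _ => by ring
      have hB : ∑ i, ∑ i', max (μ i) 0 * max (-μ i') 0 * P i' j
          = S * ∑ i', max (-μ i') 0 * P i' j := by
        rw [hS, Finset.sum_mul]
        refine Finset.sum_congr rfl fun i _ => ?_
        rw [Finset.mul_sum]
        exact Finset.sum_congr rfl fun i' _ => by ring
      have hmu : ∑ i, μ i * P i j
          = (∑ i, max (μ i) 0 * P i j) - ∑ i', max (-μ i') 0 * P i' j := by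
        rw [← Finset.sum_sub_distrib]
        refine Finset.sum_congr rfl fun i _ => ?_
        conv_lhs => rw [hsplit i]
        ring
      have hsplit2 : ∑ i, ∑ i', max (μ i) 0 * max (-μ i') 0 * (P i j - P i' j)
          = (∑ i, ∑ i', max (μ i) 0 * max (-μ i') 0 * P i j)
            - ∑ i, ∑ i', max (μ i) 0 * max (-μ i') 0 * P i' j := by
        rw [← Finset.sum_sub_distrib]
        refine Finset.sum_congr rfl fun i _ => ?_
        rw [← Finset.sum_sub_distrib]
        exact Finset.sum_congr rfl fun i' _ => by ring
      rw [hsplit2, hA, hB, hmu]; ring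
    have key2 : (∑ j, |∑ i, μ i * P i j|) * S ≤ 2 * (1 - ergQ P) * S * S := by
      calc (∑ j, |∑ i, μ i * P i j|) * S
          = ∑ j, |(∑ i, μ i * P i j) * S| := by
            rw [Finset.sum_mul]
            exact Finset.sum_congr rfl fun jj _ => by
              rw [abs_mul, abs_of_nonneg hSnonneg]
        _ ≤ ∑ j, ∑ i, ∑ i', max (μ i) 0 * max (-μ i') 0 * |P i j - P i' j| := by
            apply Finset.sum_le_sum; intro jj _
            rw [key jj]
            calc |∑ i, ∑ i', max (μ i) 0 * max (-μ i') 0 * (P i jj - P i' jj)|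
                ≤ ∑ i, |∑ i', max (μ i) 0 * max (-μ i') 0 * (P i jj - P i' jj)| :=
                  Finset.abs_sum_le_sum_abs _ _
              _ ≤ ∑ i, ∑ i', max (μ i) 0 * max (-μ i') 0 * |P i jj - P i' jj| := by
                  apply Finset.sum_le_sum; intro i _
                  calc |∑ i', max (μ i) 0 * max (-μ i') 0 * (P i jj - P i' jj)|
                      ≤ ∑ i', |max (μ i) 0 * max (-μ i') 0 * (P i jj - P i' jj)| :=
                        Finset.abs_sum_le_sum_abs _ _
                    _ = ∑ i', max (μ i) 0 * max (-μ i') 0 * |P i jj - P i' jj| := by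
                        apply Finset.sum_congr rfl; intro i' _
                        rw [abs_mul, abs_mul,
                          abs_of_nonneg (le_max_right (μ i) 0),
                          abs_of_nonneg (le_max_right (-μ i') 0)]
        _ = ∑ i, ∑ i', max (μ i) 0 * max (-μ i') 0 * ∑ j, |P i j - P i' j| := by
            rw [Finset.sum_comm]
            apply Finset.sum_congr rfl; intro i _
            rw [Finset.sum_comm]
            apply Finset.sum_congr rfl; intro i' _
            rw [Finset.mul_sum]
        _ ≤ ∑ i, ∑ i', max (μ i) 0 * max (-μ i') 0 * (2 * (1 - ergQ P)) := by
            apply Finset.sum_le_sum; intro i _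
            apply Finset.sum_le_sum; intro i' _
            exact mul_le_mul_of_nonneg_left (row_diff P hr i i')
              (mul_nonneg (le_max_right _ _) (le_max_right _ _))
        _ = 2 * (1 - ergQ P) * S * S := by
            calc ∑ i, ∑ i', max (μ i) 0 * max (-μ i') 0 * (2 * (1 - ergQ P))
                = ∑ i, max (μ i) 0 * S * (2 * (1 - ergQ P)) := by
                  refine Finset.sum_congr rfl fun i _ => ?_
                  rw [← hneg, Finset.mul_sum, Finset.sum_mul]
              _ = 2 * (1 - ergQ P) * S * S := by
                  rw [← Finset.sum_mul, ← Finset.sum_mul, ← hS]; ring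
    have hfin := (mul_le_mul_iff_of_pos_right hSpos).mp key2
    rw [hnorm]; linarith

/-- one-step coupling bound. With `P_ε = (1-ε) P₀ + ε D` (`D` with identical
rows), stationary distribution `π_ε`, for every initial distribution `p̄`, state `j`, `n ≥ 0`:
`|p_{ε,p̄,j}(n) - π_{ε,j}| ≤ (1 - Q_{ε,p̄}) (1 - Q(P₀))^n (1-ε)^n`, where
`Q_{ε,p̄} = ∑_i min (p_i) (π_{ε,i})` (with the convention `(1 - Q(P₀))^0 = 1`). -/
theorem stmt16 {m : ℕ} (hm : 0 < m) (P₀ D : Matrix (Fin m) (Fin m) ℝ)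
    (hP₀nonneg : ∀ i j, 0 ≤ P₀ i j) (hP₀row : ∀ i, ∑ j, P₀ i j = 1)
    (hDnonneg : ∀ i j, 0 ≤ D i j) (hDrow : ∀ i, ∑ j, D i j = 1)
    (hDrowsEq : ∀ i i' j, D i j = D i' j)
    (ε : ℝ) (hε : ε ∈ Set.Ioc (0 : ℝ) 1)
    (πe : Fin m → ℝ) (hπenonneg : ∀ j, 0 ≤ πe j) (hπesum : ∑ j, πe j = 1)
    (hπestat : ∀ j, ∑ i, πe i * ((1 - ε) • P₀ + ε • D) i j = πe j)
    (p : Fin m → ℝ) (hpnonneg : ∀ i, 0 ≤ p i) (hpsum : ∑ i, p i = 1)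
    (j : Fin m) (n : ℕ) :
    |(∑ i, p i * (((1 - ε) • P₀ + ε • D) ^ n) i j) - πe j|
      ≤ (1 - ∑ i, min (p i) (πe i)) * (1 - ergQ P₀) ^ n * (1 - ε) ^ n := by
  obtain ⟨hε0, hε1⟩ := hε
  have hmne : Nonempty (Fin m) := ⟨⟨0, hm⟩⟩
  set P : Matrix (Fin m) (Fin m) ℝ := (1 - ε) • P₀ + ε • D with hPdef
  have hPapp : ∀ i k, P i k = (1 - ε) * P₀ i k + ε * D i k := by
    intro i k; simp [hPdef, Matrix.add_apply, Matrix.smul_apply, smul_eq_mul]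
  have hPr : ∀ i, ∑ k, P i k = 1 := by
    intro i
    rw [Finset.sum_congr rfl fun k _ => hPapp i k, Finset.sum_add_distrib,
      ← Finset.mul_sum, ← Finset.mul_sum, hP₀row, hDrow]
    ring
  have hQ0le : ergQ P₀ ≤ 1 := by
    have h := ciInf_le (Set.finite_range
        (fun pr : Fin m × Fin m => ∑ k, min (P₀ pr.1 k) (P₀ pr.2 k))).bddBelow
      ((⟨0, hm⟩ : Fin m), (⟨0, hm⟩ : Fin m))
    simpa [ergQ, min_self, hP₀row] using h
  have hQP : 1 - ergQ P ≤ (1 - ergQ P₀) * (1 - ε) := by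
    have h : (1 - ε) * ergQ P₀ + ε ≤ ergQ P := by
      apply le_ciInf
      intro pr
      have hmin : ∀ k ∈ Finset.univ, min (P pr.1 k) (P pr.2 k)
          = (1 - ε) * min (P₀ pr.1 k) (P₀ pr.2 k) + ε * D pr.1 k := by
        intro k _
        rw [hPapp, hPapp, hDrowsEq pr.2 pr.1 k]
        rcases le_total (P₀ pr.1 k) (P₀ pr.2 k) with h | h
        · rw [min_eq_left (by nlinarith), min_eq_left h]
        · rw [min_eq_right (by nlinarith), min_eq_right h]
      have hsum : ∑ k, min (P pr.1 k) (P pr.2 k)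
          = (1 - ε) * (∑ k, min (P₀ pr.1 k) (P₀ pr.2 k)) + ε := by
        rw [Finset.sum_congr rfl hmin, Finset.sum_add_distrib, ← Finset.mul_sum,
          ← Finset.mul_sum, hDrow]
        ring
      have hQ0 : ergQ P₀ ≤ ∑ k, min (P₀ pr.1 k) (P₀ pr.2 k) :=
        ciInf_le (Set.finite_range _).bddBelow pr
      rw [hsum]
      nlinarith
    nlinarith
  set c : ℝ := (1 - ergQ P₀) * (1 - ε) with hc
  have hcnonneg : 0 ≤ c := mul_nonneg (by linarith) (by linarith)
  set μ : Fin m → ℝ := fun i => p i - πe i with hμdef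
  have hμsum : ∑ i, μ i = 0 := by
    rw [hμdef]; rw [Finset.sum_sub_distrib, hpsum, hπesum]; ring
  set ν : ℕ → Fin m → ℝ := fun n k => ∑ i, μ i * (P ^ n) i k with hνdef
  have hν0 : ∀ k, ν 0 k = μ k := by
    intro k
    simp [hνdef, Matrix.one_apply, mul_ite, mul_one, mul_zero]
  have hνsucc : ∀ N k, ν (N + 1) k = ∑ i2, ν N i2 * P i2 k := by
    intro N k
    rw [hνdef]
    simp only [pow_succ, Matrix.mul_apply, Finset.mul_sum]
    rw [Finset.sum_comm]
    refine Finset.sum_congr rfl fun i2 _ => ?_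
    rw [Finset.sum_mul]
    exact Finset.sum_congr rfl fun i _ => by ring
  have hνzero : ∀ N, ∑ k, ν N k = 0 := by
    intro N
    induction N with
    | zero => rw [Finset.sum_congr rfl fun k _ => hν0 k]; exact hμsum
    | succ N ih =>
      rw [Finset.sum_congr rfl fun k _ => hνsucc N k, Finset.sum_comm]
      calc ∑ i2, ∑ k, ν N i2 * P i2 k = ∑ i2, ν N i2 * ∑ k, P i2 k := by
            exact Finset.sum_congr rfl fun i2 _ => (Finset.mul_sum _ _ _).symm
        _ = 0 := by
            rw [Finset.sum_congr rfl fun i2 _ => by rw [hPr i2, mul_one]]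
            exact ih
  have hbound : ∀ N, ∑ k, |ν N k| ≤ c ^ N * ∑ i, |μ i| := by
    intro N
    induction N with
    | zero =>
      rw [pow_zero, one_mul, Finset.sum_congr rfl fun k _ => by rw [hν0 k]]
    | succ N ih =>
      have h1 : ∑ k, |ν (N + 1) k| ≤ (1 - ergQ P) * ∑ k, |ν N k| := by
        rw [Finset.sum_congr rfl fun k _ => by rw [hνsucc N k]]
        exact contraction P hPr (ν N) (hνzero N)
      have habs : 0 ≤ ∑ k, |ν N k| := Finset.sum_nonneg fun k _ => abs_nonneg _
      have h2 : (1 - ergQ P) * ∑ k, |ν N k| ≤ c * ∑ k, |ν N k| :=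
        mul_le_mul_of_nonneg_right hQP habs
      have h3 : c * ∑ k, |ν N k| ≤ c * (c ^ N * ∑ i, |μ i|) :=
        mul_le_mul_of_nonneg_left ih hcnonneg
      calc ∑ k, |ν (N + 1) k| ≤ c * (c ^ N * ∑ i, |μ i|) := by linarith
        _ = c ^ (N + 1) * ∑ i, |μ i| := by rw [pow_succ]; ring
  have hstat : ∀ N k, ∑ i, πe i * (P ^ N) i k = πe k := by
    intro N
    induction N with
    | zero => intro k; simp [Matrix.one_apply, mul_ite, mul_one, mul_zero]
    | succ N ih =>
      intro k
      have : ∑ i, πe i * (P ^ (N + 1)) i k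
          = ∑ i2, (∑ i, πe i * (P ^ N) i i2) * P i2 k := by
        simp only [pow_succ, Matrix.mul_apply, Finset.mul_sum]
        rw [Finset.sum_comm]
        refine Finset.sum_congr rfl fun i2 _ => ?_
        rw [Finset.sum_mul]
        exact Finset.sum_congr rfl fun i _ => by ring
      rw [this, Finset.sum_congr rfl fun i2 _ => by rw [ih i2]]
      exact hπestat k
  have hνeq : (∑ i, p i * (P ^ n) i j) - πe j = ν n j := by
    rw [hνdef]
    simp only [hμdef, sub_mul]
    rw [Finset.sum_sub_distrib, hstat n j]
  have habsmu : ∑ i, |μ i| = 2 * (1 - ∑ i, min (p i) (πe i)) := by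
    have h : ∀ i ∈ Finset.univ, |μ i| = p i + πe i - 2 * min (p i) (πe i) := by
      intro i _
      rw [hμdef]
      rcases le_total (p i) (πe i) with h | h
      · rw [abs_of_nonpos (by simpa using h), min_eq_left h]; ring
      · rw [abs_of_nonneg (by simpa using h), min_eq_right h]; ring
    rw [Finset.sum_congr rfl h, Finset.sum_sub_distrib, Finset.sum_add_distrib,
      hpsum, hπesum, ← Finset.mul_sum]
    ring
  rw [hνeq]
  calc |ν n j| ≤ (∑ k, |ν n k|) / 2 := half_l1 (ν n) (hνzero n) j
    _ ≤ (c ^ n * ∑ i, |μ i|) / 2 := by linarith [hbound n]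
    _ = (1 - ∑ i, min (p i) (πe i)) * (1 - ergQ P₀) ^ n * (1 - ε) ^ n := by
        rw [habsmu, hc, mul_pow]; ring
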